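/- Fix σ² ≥ 1 and r ∈ (0,1]. Then for every a ∈ (0,1], the same-component diffusion correlation is bounded between its high-noise and low-noise endpoint values: √r ≤ ρ(σ², r, a) ≤ √( r·σ² / (r·(σ² − 1) + 1) ), where the upper bound is the value ρ(σ², r, 1) attained at a = 1. -/

import Mathlib

open Real

/-- The same-component diffusion correlation `ρ(σ², r, a)` of the forward diffusion process
in the isotropic case `Σ = σ²·I`, with `ᾱ_t = a` and `ᾱ_{t+τ} = r·a` (Theorem 2 of the
paper):
`ρ(σ², r, a) = (√r·a·σ² + √r·(1 − a)) / √((a·σ² + 1 − a)·(r·a·σ² + 1 − r·a))`. -/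
noncomputable def ρ (σ2 r a : ℝ) : ℝ :=
  (Real.sqrt r * a * σ2 + Real.sqrt r * (1 - a)) /
    Real.sqrt ((a * σ2 + 1 - a) * (r * a * σ2 + 1 - r * a))

lemma rho_eq (σ2 r a : ℝ) (hr : 0 ≤ r) (hA : 0 < a * σ2 + 1 - a)
    (hB : 0 < r * a * σ2 + 1 - r * a) :
    ρ σ2 r a = Real.sqrt (r * (a * σ2 + 1 - a) / (r * a * σ2 + 1 - r * a)) := by
  set A := a * σ2 + 1 - a with hAdef
  set B := r * a * σ2 + 1 - r * a with hBdef
  have hsA : (0:ℝ) < Real.sqrt A := Real.sqrt_pos.mpr hA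
  have hsB : (0:ℝ) < Real.sqrt B := Real.sqrt_pos.mpr hB
  have h1 : Real.sqrt (A * B) = Real.sqrt A * Real.sqrt B := Real.sqrt_mul hA.le B
  have h2 : Real.sqrt (r * A / B) = Real.sqrt r * Real.sqrt A / Real.sqrt B := by
    rw [Real.sqrt_div (by positivity) B, Real.sqrt_mul hr A]
  have hnum : Real.sqrt r * a * σ2 + Real.sqrt r * (1 - a) = Real.sqrt r * A := by
    rw [hAdef]; ring
  have hAA : Real.sqrt A * Real.sqrt A = A := Real.mul_self_sqrt hA.le
  rw [ρ, hnum, h1, h2]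
  field_simp
  linear_combination (-1 : ℝ) * Real.sqrt r * hAA

/-- Fix `σ² ≥ 1` and `r ∈ (0,1]`. Then for every `a ∈ (0,1]`, the same-component
diffusion correlation is bounded between its high-noise and low-noise endpoint values:
`√r ≤ ρ(σ², r, a) ≤ √( r·σ² / (r·(σ² − 1) + 1) )`, where the upper bound is the value
`ρ(σ², r, 1)` attained at `a = 1`. -/
theorem stmt_12 (σ2 r : ℝ) (hσ : 1 ≤ σ2) (hr : r ∈ Set.Ioc (0 : ℝ) 1) :
    (∀ a ∈ Set.Ioc (0 : ℝ) 1,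
      Real.sqrt r ≤ ρ σ2 r a ∧
        ρ σ2 r a ≤ Real.sqrt (r * σ2 / (r * (σ2 - 1) + 1))) ∧
    ρ σ2 r 1 = Real.sqrt (r * σ2 / (r * (σ2 - 1) + 1)) := by
  obtain ⟨hr0, hr1⟩ := hr
  have key : ∀ a ∈ Set.Ioc (0 : ℝ) 1,
      ρ σ2 r a = Real.sqrt (r * (a * σ2 + 1 - a) / (r * a * σ2 + 1 - r * a)) := by
    intro a ⟨ha0, ha1⟩
    refine rho_eq σ2 r a hr0.le (by nlinarith) ?_
    nlinarith [mul_nonneg (mul_nonneg hr0.le ha0.le) (by linarith : (0:ℝ) ≤ σ2 - 1)]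
  constructor
  · intro a ha
    obtain ⟨ha0, ha1⟩ := ha
    have hA : (0:ℝ) < a * σ2 + 1 - a := by nlinarith
    have hB : (0:ℝ) < r * a * σ2 + 1 - r * a := by
      nlinarith [mul_nonneg (mul_nonneg hr0.le ha0.le) (by linarith : (0:ℝ) ≤ σ2 - 1)]
    have hC : (0:ℝ) < r * (σ2 - 1) + 1 := by nlinarith
    rw [key a ⟨ha0, ha1⟩]
    constructor
    · apply Real.sqrt_le_sqrt
      rw [le_div_iff₀ hB]
      nlinarith [mul_nonneg (mul_nonneg (mul_nonneg hr0.le ha0.le) (by linarith : (0:ℝ) ≤ 1 - r)) (by linarith : (0:ℝ) ≤ σ2 - 1)]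
    · apply Real.sqrt_le_sqrt
      rw [div_le_div_iff₀ hB hC]
      nlinarith [mul_nonneg (mul_nonneg (mul_nonneg hr0.le (by linarith : (0:ℝ) ≤ σ2 - 1)) (by linarith : (0:ℝ) ≤ 1 - a)) (by linarith : (0:ℝ) ≤ 1 - r)]
  · rw [key 1 ⟨one_pos, le_refl 1⟩]
    ring_nf
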